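/- Fix nonnegative integers i, j with j ≤ i, and let O(i,j) = ⨄_{k=0}^{j} O(i,j,k) as defined via overpartitions with parts at most j−1 satisfying the overline condition. Let O_1 = {λ ∈ O(i,j) : ol(λ) ≥ 1 and the largest overlined part λ_t equals j−ℓ(λ)+ol(λ)−1}, O_2 = {λ ∈ O(i,j) : ol(λ) ≥ 1 and λ_t < j−ℓ(λ)+ol(λ)−1}, and O_3 = {λ ∈ O(i,j) : ol(λ) = 0}. Then O(i,j) is the disjoint union of O_1, O_2, O_3; i.e., for every λ ∈ O(i,j) with ol(λ) ≥ 1, the largest overlined part satisfies λ_t ≤ j−ℓ(λ)+ol(λ)−1. -/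

import Mathlib

open Finset
open scoped Classical

/-- The variable `q`, as a rational function over `ℚ`. -/
noncomputable def q : RatFunc ℚ := RatFunc.X

/-- The q-shifted factorial `(a; q)_k`. -/
noncomputable def qPoch (a : RatFunc ℚ) (k : ℕ) : RatFunc ℚ :=
  ∏ s ∈ Finset.range k, (1 - a * q ^ s)

/-- The Gaussian (q-binomial) coefficient. -/
noncomputable def qbinom (j k : ℕ) : RatFunc ℚ :=
  qPoch q j / (qPoch q k * qPoch q (j - k))

/-- The set `O(i,j,k)` of overpartitions with exactly `k` nonnegative parts, each part at
most `j-1` (encoded as a weakly decreasing function `Fin k → Fin j` together with an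
overlining indicator `Fin k → Bool`, where only first occurrences may be overlined),
such that for each `1 ≤ s ≤ k-1`, if `j-s` occurs as a part then there are at least
`k-s` overlined parts strictly to its right. (It does not depend on `i`.) -/
noncomputable def AGset (j k : ℕ) : Finset ((Fin k → Fin j) × (Fin k → Bool)) :=
  Finset.univ.filter (fun p =>
    (∀ a b : Fin k, a ≤ b → (p.1 b : ℕ) ≤ (p.1 a : ℕ)) ∧
    (∀ a : Fin k, p.2 a = true → ∀ b : Fin k, b < a → p.1 b ≠ p.1 a) ∧
    (∀ s ∈ Finset.Icc 1 (k - 1), ∀ a : Fin k, (p.1 a : ℕ) = j - s →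
      k - s ≤ (Finset.univ.filter (fun b : Fin k => a < b ∧ p.2 b = true)).card))

/-- The number of overlined parts of an overpartition. -/
def ol {j k : ℕ} (p : (Fin k → Fin j) × (Fin k → Bool)) : ℕ :=
  (Finset.univ.filter (fun a : Fin k => p.2 a = true)).card

/-- The size (sum of parts) of an overpartition. -/
def psize {j k : ℕ} (p : (Fin k → Fin j) × (Fin k → Bool)) : ℕ :=
  ∑ a, (p.1 a : ℕ)

/-- Decomposition lemma: every `λ ∈ O(i,j,k)` (with `k ≤ j ≤ i`) having at least one
overlined part has its largest overlined part at most `j - ℓ(λ) + ol(λ) - 1`; i.e. every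
overlined part is at most this bound. Hence `O(i,j)` is the disjoint union of
`O_1(i,j)`, `O_2(i,j)` and `O_3(i,j)`. -/
theorem AG_decomposition (i j k : ℕ) (hkj : k ≤ j) (hji : j ≤ i)
    (p : (Fin k → Fin j) × (Fin k → Bool)) (hp : p ∈ AGset j k) (hol : 1 ≤ ol p) :
    ∀ a : Fin k, p.2 a = true → (p.1 a : ℕ) ≤ j - k + ol p - 1 := by
  intro a ha
  simp only [AGset, Finset.mem_filter] at hp
  obtain ⟨-, -, -, hcond⟩ := hp
  by_contra hlt
  push_neg at hlt
  set m := (p.1 a : ℕ) with hmdef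
  have hm : m < j := (p.1 a).2
  have holk : ol p ≤ k := by
    unfold ol
    exact (Finset.card_filter_le _ _).trans (by simp)
  have hs1 : (1:ℕ) ≤ j - m := by omega
  have hsk : j - m ≤ k - 1 := by omega
  have hkey := hcond (j - m) (Finset.mem_Icc.mpr ⟨hs1, hsk⟩) a (by omega)
  have hsub : insert a (Finset.univ.filter (fun b : Fin k => a < b ∧ p.2 b = true)) ⊆
      Finset.univ.filter (fun b : Fin k => p.2 b = true) := by
    intro b hb
    simp only [Finset.mem_insert, Finset.mem_filter] at *
    rcases hb with rfl | hb
    · exact ⟨Finset.mem_univ _, ha⟩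
    · exact ⟨Finset.mem_univ _, hb.2.2⟩
  have hna : a ∉ Finset.univ.filter (fun b : Fin k => a < b ∧ p.2 b = true) := by simp
  have hcard := Finset.card_le_card hsub
  rw [Finset.card_insert_of_notMem hna] at hcard
  unfold ol at *
  omega
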